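/- There exists a compact metric space X and a homeomorphism f : X → X that is (4,2)-expansive but not (3,2)-expansive. -/

import Mathlib

variable {X : Type*} [MetricSpace X]

/-- The `k`-th iterate (`k ∈ ℤ`) of a homeomorphism, as a function. -/
noncomputable def hiter (f : X ≃ₜ X) (k : ℤ) : X → X := ⇑(f.toEquiv ^ k)

/-- A set is `δ`-separated if distinct points are at distance `> δ`. -/
def IsSeparated' (δ : ℝ) (B : Set X) : Prop :=
  ∀ x ∈ B, ∀ y ∈ B, x ≠ y → δ < dist x y

/-- The `δ`-cardinality of a set: sup of cardinalities of `δ`-separated subsets. -/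
noncomputable def dCard (δ : ℝ) (A : Set X) : ℕ∞ :=
  ⨆ B ∈ {B : Set X | B ⊆ A ∧ IsSeparated' δ B}, B.encard

/-- `(m,n)`-expansiveness with a given expansive constant `δ`. -/
def MNExpansiveWith (f : X ≃ₜ X) (m n : ℕ) (δ : ℝ) : Prop :=
  ∀ A : Set X, A.encard = m → ∃ k : ℤ, (n : ℕ∞) < dCard δ (hiter f k '' A)

/-- `(m,n)`-expansiveness. -/
def MNExpansive (f : X ≃ₜ X) (m n : ℕ) : Prop :=
  ∃ δ > 0, MNExpansiveWith f m n δ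


noncomputable def xr (k : ℤ) : ℝ := 2^k / (2^k + 1)
noncomputable def yr (k : ℤ) : ℝ := 1 + xr k
lemma two_zpow_pos (k : ℤ) : (0:ℝ) < 2^k := zpow_pos (by norm_num) k
lemma xr_pos (k : ℤ) : 0 < xr k := div_pos (two_zpow_pos k) (by linarith [two_zpow_pos k])
lemma xr_lt_one (k : ℤ) : xr k < 1 := by
  have h := two_zpow_pos k
  rw [xr, div_lt_one (by linarith)]; linarith


lemma xr_zero : xr 0 = 1/2 := by norm_num [xr]

lemma xr_le_third {k : ℤ} (hk : k ≤ -1) : xr k ≤ 1/3 := by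
  have h := two_zpow_pos k
  have h2 : (2:ℝ)^k ≤ 2^(-1:ℤ) := zpow_le_zpow_right₀ (by norm_num) hk
  have h3 : (2:ℝ)^(-1:ℤ) = 1/2 := by norm_num
  rw [h3] at h2
  rw [xr, div_le_iff₀ (by linarith)]; nlinarith

lemma xr_ge_two_thirds {k : ℤ} (hk : 1 ≤ k) : 2/3 ≤ xr k := by
  have h := two_zpow_pos k
  have h2 : (2:ℝ)^(1:ℤ) ≤ 2^k := zpow_le_zpow_right₀ (by norm_num) hk
  have h3 : (2:ℝ)^(1:ℤ) = 2 := by norm_num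
  rw [h3] at h2
  rw [xr, le_div_iff₀ (by linarith)]; nlinarith

lemma yr_pos (k : ℤ) : 1 < yr k := by have := xr_pos k; simp only [yr]; linarith
lemma yr_lt_two (k : ℤ) : yr k < 2 := by have := xr_lt_one k; simp only [yr]; linarith

noncomputable def F (t : ℝ) : ℝ := if t ≤ 1 then 2*t/(1+|t|) else 3 - 2/(max t 1)
noncomputable def G (t : ℝ) : ℝ := if t ≤ 1 then t/(2-t) else 2/(3-t)

lemma F_cont : Continuous F := by
  apply Continuous.if_le
  · apply Continuous.div (by fun_prop) (by fun_prop)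
    intro x; positivity
  · apply Continuous.sub continuous_const
    apply Continuous.div continuous_const (by fun_prop)
    intro x; have : (1:ℝ) ≤ max x 1 := le_max_right _ _; positivity
  · exact continuous_id
  · exact continuous_const
  · intro a ha; rw [ha]; norm_num

lemma F_zero : F 0 = 0 := by norm_num [F]
lemma F_one : F 1 = 1 := by norm_num [F]
lemma F_two : F 2 = 2 := by norm_num [F]
lemma G_zero : G 0 = 0 := by norm_num [G]
lemma G_one : G 1 = 1 := by norm_num [G]
lemma G_two : G 2 = 2 := by norm_num [G]

lemma F_xr (k : ℤ) : F (xr k) = xr (k+1) := by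
  have h := two_zpow_pos k
  have hle : xr k ≤ 1 := (xr_lt_one k).le
  have habs : |xr k| = xr k := abs_of_pos (xr_pos k)
  rw [F, if_pos hle, habs, xr, xr, zpow_add_one₀ (by norm_num)]
  field_simp
  ring

lemma F_yr (k : ℤ) : F (yr k) = yr (k+1) := by
  have h := two_zpow_pos k
  have hgt : ¬ (yr k ≤ 1) := by simp [yr]; exact (xr_pos k)
  have hmax : max (yr k) 1 = yr k := max_eq_left (by simp [yr]; linarith [xr_pos k])
  rw [F, if_neg hgt, hmax, yr, yr, xr, xr, zpow_add_one₀ (by norm_num)]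
  have h1 : (2:ℝ)^k + 1 > 0 := by linarith
  have h2 : 1 + (2:ℝ)^k/(2^k+1) ≠ 0 := by positivity
  field_simp
  ring

lemma G_xr (k : ℤ) : G (xr k) = xr (k-1) := by
  have hu : (0:ℝ) < 2^(k-1) := two_zpow_pos (k-1)
  have hk : (2:ℝ)^k = 2 * 2^(k-1) := by
    rw [zpow_sub_one₀ (by norm_num : (2:ℝ) ≠ 0)]; ring
  have hle : xr k ≤ 1 := (xr_lt_one k).le
  have key : ∀ u : ℝ, 0 < u → (2*u/(2*u+1))/(2 - 2*u/(2*u+1)) = u/(u+1) := by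
    intro u hu
    have h1 : (0:ℝ) < 2*u+1 := by linarith
    have hlt : 2*u/(2*u+1) < 1 := (div_lt_one h1).mpr (by linarith)
    have hd : (2:ℝ) - 2*u/(2*u+1) ≠ 0 := by linarith
    have h2 : (2:ℝ) + u*2 ≠ 0 := by positivity
    field_simp [h2]
    linear_combination mul_inv_cancel₀ (show (1:ℝ) + u ≠ 0 by positivity)
  rw [G, if_pos hle, xr, xr, hk]
  exact key _ hu

lemma G_yr (k : ℤ) : G (yr k) = yr (k-1) := by
  have hu : (0:ℝ) < 2^(k-1) := two_zpow_pos (k-1)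
  have hk : (2:ℝ)^k = 2 * 2^(k-1) := by
    rw [zpow_sub_one₀ (by norm_num : (2:ℝ) ≠ 0)]; ring
  have hgt : ¬ (yr k ≤ 1) := by simp [yr]; exact (xr_pos k)
  have key : ∀ u : ℝ, 0 < u → 2/(3 - (1 + 2*u/(2*u+1))) = 1 + u/(u+1) := by
    intro u hu
    have h1 : (0:ℝ) < 2*u+1 := by linarith
    have hlt : 2*u/(2*u+1) < 1 := (div_lt_one h1).mpr (by linarith)
    have hd : (3:ℝ) - (1 + 2*u/(2*u+1)) ≠ 0 := by linarith
    have h2 : (2:ℝ) + u*2 ≠ 0 := by positivity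
    field_simp [h2]
    linear_combination (1+2*u) * mul_inv_cancel₀ h2
  rw [G, if_neg hgt, yr, yr, xr, xr, hk]
  exact key _ hu

def S : Set ℝ := {0, 1, 2} ∪ Set.range xr ∪ Set.range yr

lemma mem_S_xr (k : ℤ) : xr k ∈ S := Or.inl (Or.inr ⟨k, rfl⟩)
lemma mem_S_yr (k : ℤ) : yr k ∈ S := Or.inr ⟨k, rfl⟩
lemma mem_S_0 : (0:ℝ) ∈ S := Or.inl (Or.inl (by simp))
lemma mem_S_1 : (1:ℝ) ∈ S := Or.inl (Or.inl (by simp))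
lemma mem_S_2 : (2:ℝ) ∈ S := Or.inl (Or.inl (by simp))

lemma F_mem (p : ℝ) (hp : p ∈ S) : F p ∈ S := by
  rcases hp with ((h|h|h)|⟨k,rfl⟩)|⟨k,rfl⟩
  · subst h; rw [F_zero]; exact mem_S_0
  · subst h; rw [F_one]; exact mem_S_1
  · subst h; rw [F_two]; exact mem_S_2
  · rw [F_xr]; exact mem_S_xr _
  · rw [F_yr]; exact mem_S_yr _

lemma G_mem (p : ℝ) (hp : p ∈ S) : G p ∈ S := by
  rcases hp with ((h|h|h)|⟨k,rfl⟩)|⟨k,rfl⟩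
  · subst h; rw [G_zero]; exact mem_S_0
  · subst h; rw [G_one]; exact mem_S_1
  · subst h; rw [G_two]; exact mem_S_2
  · rw [G_xr]; exact mem_S_xr _
  · rw [G_yr]; exact mem_S_yr _

lemma GF (p : ℝ) (hp : p ∈ S) : G (F p) = p := by
  rcases hp with ((h|h|h)|⟨k,rfl⟩)|⟨k,rfl⟩
  · subst h; rw [F_zero, G_zero]
  · subst h; rw [F_one, G_one]
  · subst h; rw [F_two, G_two]
  · rw [F_xr, G_xr]; norm_num
  · rw [F_yr, G_yr]; norm_num

lemma FG (p : ℝ) (hp : p ∈ S) : F (G p) = p := by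
  rcases hp with ((h|h|h)|⟨k,rfl⟩)|⟨k,rfl⟩
  · subst h; rw [G_zero, F_zero]
  · subst h; rw [G_one, F_one]
  · subst h; rw [G_two, F_two]
  · rw [G_xr, F_xr]; norm_num
  · rw [G_yr, F_yr]; norm_num

lemma tendsto_aux : Filter.Tendsto (fun n : ℕ => (1:ℝ)/(2^n+1)) Filter.atTop (nhds 0) := by
  have h1 : Filter.Tendsto (fun n : ℕ => (2:ℝ)^n + 1) Filter.atTop Filter.atTop := by
    apply Filter.tendsto_atTop_add_const_right
    exact tendsto_pow_atTop_atTop_of_one_lt (by norm_num)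
  simpa [one_div, Pi.inv_def] using h1.inv_tendsto_atTop

lemma xr_nat (n : ℕ) : xr n = 1 - 1/(2^n+1) := by
  have h : (0:ℝ) < 2^(n:ℤ) := two_zpow_pos _
  rw [xr, zpow_natCast]
  rw [zpow_natCast] at h
  field_simp; ring

lemma xr_neg_nat (n : ℕ) : xr (-n) = 1/(2^n+1) := by
  have h : (0:ℝ) < 2^(n:ℤ) := two_zpow_pos _
  rw [zpow_natCast] at h
  rw [xr, zpow_neg, zpow_natCast]
  rw [eq_div_iff (by linarith)]
  field_simp
  ring

lemma S_compact : IsCompact S := by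
  have c1 : IsCompact (insert (1:ℝ) (Set.range fun n:ℕ => xr n)) := by
    apply Filter.Tendsto.isCompact_insert_range
    have : Filter.Tendsto (fun n : ℕ => 1 - (1:ℝ)/(2^n+1)) Filter.atTop (nhds (1 - 0)) :=
      Filter.Tendsto.const_sub _ tendsto_aux
    simp only [sub_zero] at this
    simpa [xr_nat] using this
  have c0 : IsCompact (insert (0:ℝ) (Set.range fun n:ℕ => xr (-n))) := by
    apply Filter.Tendsto.isCompact_insert_range
    simpa [xr_neg_nat] using tendsto_aux
  have c3 : IsCompact (insert (2:ℝ) (Set.range fun n:ℕ => yr n)) := by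
    apply Filter.Tendsto.isCompact_insert_range
    have : Filter.Tendsto (fun n : ℕ => 2 - (1:ℝ)/(2^n+1)) Filter.atTop (nhds (2 - 0)) :=
      Filter.Tendsto.const_sub _ tendsto_aux
    simp only [sub_zero] at this
    have hy : ∀ n : ℕ, yr n = 2 - 1/(2^n+1) := by
      intro n; rw [yr, xr_nat]; ring
    simpa [hy] using this
  have c2 : IsCompact (insert (1:ℝ) (Set.range fun n:ℕ => yr (-n))) := by
    apply Filter.Tendsto.isCompact_insert_range
    have : Filter.Tendsto (fun n : ℕ => 1 + (1:ℝ)/(2^n+1)) Filter.atTop (nhds (1 + 0)) :=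
      Filter.Tendsto.const_add _ tendsto_aux
    simp only [add_zero] at this
    have hy : ∀ n : ℕ, yr (-n) = 1 + 1/(2^n+1) := by
      intro n; rw [yr, xr_neg_nat]
    simpa [hy] using this
  have hSeq : S = (insert (1:ℝ) (Set.range fun n:ℕ => xr n)) ∪
      (insert (0:ℝ) (Set.range fun n:ℕ => xr (-n))) ∪
      (insert (2:ℝ) (Set.range fun n:ℕ => yr n)) ∪
      (insert (1:ℝ) (Set.range fun n:ℕ => yr (-n))) := by
    apply Set.Subset.antisymm
    · rintro p (((h|h|h)|⟨k,rfl⟩)|⟨k,rfl⟩)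
      · subst h; exact Or.inl (Or.inl (Or.inr (Set.mem_insert _ _)))
      · subst h; exact Or.inl (Or.inl (Or.inl (Set.mem_insert _ _)))
      · subst h; exact Or.inl (Or.inr (Set.mem_insert _ _))
      · rcases le_or_gt 0 k with hk | hk
        · refine Or.inl (Or.inl (Or.inl (Set.mem_insert_iff.2 (Or.inr ⟨k.toNat, ?_⟩))))
          show xr ((k.toNat : ℕ) : ℤ) = xr k
          congr 1; omega
        · refine Or.inl (Or.inl (Or.inr (Set.mem_insert_iff.2 (Or.inr ⟨(-k).toNat, ?_⟩))))
          show xr (-(((-k).toNat : ℕ) : ℤ)) = xr k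
          congr 1; omega
      · rcases le_or_gt 0 k with hk | hk
        · refine Or.inl (Or.inr (Set.mem_insert_iff.2 (Or.inr ⟨k.toNat, ?_⟩)))
          show yr ((k.toNat : ℕ) : ℤ) = yr k
          congr 1; omega
        · refine Or.inr (Set.mem_insert_iff.2 (Or.inr ⟨(-k).toNat, ?_⟩))
          show yr (-(((-k).toNat : ℕ) : ℤ)) = yr k
          congr 1; omega
    · refine Set.union_subset (Set.union_subset (Set.union_subset ?_ ?_) ?_) ?_
      · exact Set.insert_subset mem_S_1 (Set.range_subset_iff.2 fun n => mem_S_xr _)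
      · exact Set.insert_subset mem_S_0 (Set.range_subset_iff.2 fun n => mem_S_xr _)
      · exact Set.insert_subset mem_S_2 (Set.range_subset_iff.2 fun n => mem_S_yr _)
      · exact Set.insert_subset mem_S_1 (Set.range_subset_iff.2 fun n => mem_S_yr _)
  rw [hSeq]
  exact ((c1.union c0).union c3).union c2

abbrev XT : Type := ↥S

noncomputable instance : MetricSpace XT := Subtype.metricSpace

instance XT_compact : CompactSpace XT := isCompact_iff_compactSpace.mp S_compact

noncomputable def eF : XT ≃ XT where
  toFun p := ⟨F p.1, F_mem p.1 p.2⟩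
  invFun p := ⟨G p.1, G_mem p.1 p.2⟩
  left_inv p := Subtype.ext (GF p.1 p.2)
  right_inv p := Subtype.ext (FG p.1 p.2)

lemma eF_cont : Continuous (eF : XT → XT) := by
  apply Continuous.subtype_mk
  exact F_cont.comp continuous_subtype_val

noncomputable def fH : XT ≃ₜ XT := Continuous.homeoOfEquivCompactToT2 (f := eF) eF_cont

lemma fH_toEquiv : fH.toEquiv = eF := rfl

noncomputable def px (k : ℤ) : XT := ⟨xr k, mem_S_xr k⟩
noncomputable def py (k : ℤ) : XT := ⟨yr k, mem_S_yr k⟩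
noncomputable def z0 : XT := ⟨0, mem_S_0⟩
noncomputable def z1 : XT := ⟨1, mem_S_1⟩
noncomputable def z2 : XT := ⟨2, mem_S_2⟩

lemma equiv_zpow_shift {α : Type*} (e : α ≃ α) (g : ℤ → α) (h : ∀ i, e (g i) = g (i+1)) :
    ∀ (k i : ℤ), (e ^ k) (g i) = g (i + k) := by
  have hsymm : ∀ i, e.symm (g i) = g (i - 1) := by
    intro i
    have := h (i-1)
    rw [show i - 1 + 1 = i by ring] at this
    rw [← this, Equiv.symm_apply_apply]
  intro k
  induction k using Int.induction_on with
  | zero => intro i; simp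
  | succ n ih =>
      intro i
      rw [zpow_add_one, Equiv.Perm.mul_apply, h, ih]; congr 1; ring
  | pred n ih =>
      intro i
      rw [zpow_sub_one, Equiv.Perm.mul_apply]
      have : (e⁻¹ : α ≃ α) (g i) = g (i - 1) := hsymm i
      rw [this, ih]
      congr 1; ring

lemma hiter_px (k i : ℤ) : hiter fH k (px i) = px (i + k) := by
  apply equiv_zpow_shift fH.toEquiv px (fun i => Subtype.ext (F_xr i)) k i

lemma hiter_py (k i : ℤ) : hiter fH k (py i) = py (i + k) := by
  apply equiv_zpow_shift fH.toEquiv py (fun i => Subtype.ext (F_yr i)) k i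

lemma hiter_z0 (k : ℤ) : hiter fH k z0 = z0 :=
  equiv_zpow_shift fH.toEquiv (fun _ => z0) (fun _ => Subtype.ext F_zero) k 0

lemma hiter_z1 (k : ℤ) : hiter fH k z1 = z1 :=
  equiv_zpow_shift fH.toEquiv (fun _ => z1) (fun _ => Subtype.ext F_one) k 0

lemma hiter_z2 (k : ℤ) : hiter fH k z2 = z2 :=
  equiv_zpow_shift fH.toEquiv (fun _ => z2) (fun _ => Subtype.ext F_two) k 0

lemma distXT (p q : XT) : dist p q = |p.1 - q.1| := by
  rw [Subtype.dist_eq, Real.dist_eq]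

lemma mem_cases (p : XT) : p = z0 ∨ p = z1 ∨ p = z2 ∨ (∃ i, p = px i) ∨ (∃ i, p = py i) := by
  obtain ⟨v, hv⟩ := p
  rcases hv with ((h|h|h)|⟨k,hk⟩)|⟨k,hk⟩
  · exact Or.inl (Subtype.ext h)
  · exact Or.inr (Or.inl (Subtype.ext h))
  · exact Or.inr (Or.inr (Or.inl (Subtype.ext h)))
  · exact Or.inr (Or.inr (Or.inr (Or.inl ⟨k, Subtype.ext hk.symm⟩)))
  · exact Or.inr (Or.inr (Or.inr (Or.inr ⟨k, Subtype.ext hk.symm⟩)))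

lemma encard_le_dCard {δ : ℝ} {A B : Set XT} (hB : B ⊆ A) (hsep : IsSeparated' δ B) :
    B.encard ≤ dCard δ A := by
  exact le_iSup₂ (f := fun (B : Set XT) (_ : B ∈ {B : Set XT | B ⊆ A ∧ IsSeparated' δ B}) => B.encard) B ⟨hB, hsep⟩

lemma three_sep {δ : ℝ} (hδ : 0 ≤ δ) {A : Set XT} {p q r : XT}
    (hp : p ∈ A) (hq : q ∈ A) (hr : r ∈ A)
    (h1 : δ < dist p q) (h2 : δ < dist p r) (h3 : δ < dist q r) :
    2 < dCard δ A := by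
  have hpq : p ≠ q := by rintro rfl; simp at h1; linarith
  have hpr : p ≠ r := by rintro rfl; simp at h2; linarith
  have hqr : q ≠ r := by rintro rfl; simp at h3; linarith
  have hsep : IsSeparated' δ ({p, q, r} : Set XT) := by
    rintro a (rfl|rfl|rfl) b (rfl|rfl|rfl) hab <;>
      first
        | exact absurd rfl hab
        | assumption
        | (rw [dist_comm]; assumption)
  have hsub : ({p, q, r} : Set XT) ⊆ A := by
    rintro a (rfl|rfl|rfl) <;> assumption
  have hcard : ({p, q, r} : Set XT).encard = 3 := by
    rw [Set.encard_eq_three]; exact ⟨p, q, r, hpq, hpr, hqr, rfl⟩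
  calc (2:ℕ∞) < 3 := by norm_num
    _ = ({p, q, r} : Set XT).encard := hcard.symm
    _ ≤ dCard δ A := encard_le_dCard hsub hsep

lemma xr_le_half {k : ℤ} (hk : k ≤ 0) : xr k ≤ 1/2 := by
  have h := two_zpow_pos k
  have h2 : (2:ℝ)^k ≤ 2^(0:ℤ) := zpow_le_zpow_right₀ (by norm_num) hk
  rw [zpow_zero] at h2
  rw [xr, div_le_iff₀ (by linarith)]; linarith

lemma px_val (i : ℤ) : (px i).1 = xr i := rfl
lemma py_val (i : ℤ) : (py i).1 = yr i := rfl
lemma z0_val : (z0 : XT).1 = 0 := rfl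
lemma z1_val : (z1 : XT).1 = 1 := rfl
lemma z2_val : (z2 : XT).1 = 2 := rfl

lemma step {A : Set XT} (k : ℤ) {p q r : XT} (hp : p ∈ A) (hq : q ∈ A) (hr : r ∈ A)
    (h1 : 1/10 < dist (hiter fH k p) (hiter fH k q))
    (h2 : 1/10 < dist (hiter fH k p) (hiter fH k r))
    (h3 : 1/10 < dist (hiter fH k q) (hiter fH k r)) :
    ∃ k : ℤ, (2:ℕ∞) < dCard (1/10) (hiter fH k '' A) :=
  ⟨k, three_sep (by norm_num) (Set.mem_image_of_mem _ hp) (Set.mem_image_of_mem _ hq)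
    (Set.mem_image_of_mem _ hr) h1 h2 h3⟩

-- distance facts
lemma dxx_neg0 {e : ℤ} (he : e ≤ -1) : 1/10 < dist (px e) (px 0) := by
  rw [distXT, px_val, px_val, xr_zero, lt_abs]
  right; have := xr_le_third he; have := xr_pos e; linarith

lemma dxx_0pos {d : ℤ} (hd : 1 ≤ d) : 1/10 < dist (px 0) (px d) := by
  rw [distXT, px_val, px_val, xr_zero, lt_abs]
  right; have := xr_ge_two_thirds hd; linarith

lemma dxx_negpos {e d : ℤ} (he : e ≤ -1) (hd : 1 ≤ d) : 1/10 < dist (px e) (px d) := by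
  rw [distXT, px_val, px_val, lt_abs]
  right; have := xr_le_third he; have := xr_ge_two_thirds hd; linarith

lemma dx0_z0 : 1/10 < dist (px 0) z0 := by
  rw [distXT, px_val, z0_val, xr_zero]; rw [abs_of_pos] <;> norm_num

lemma dx0_z1 : 1/10 < dist (px 0) z1 := by
  rw [distXT, px_val, z1_val, xr_zero]; rw [abs_of_neg] <;> norm_num

lemma dxpos_z0 {d : ℤ} (hd : 1 ≤ d) : 1/10 < dist (px d) z0 := by
  rw [distXT, px_val, z0_val, lt_abs]
  left; have := xr_ge_two_thirds hd; linarith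

lemma dxneg_z1 {e : ℤ} (he : e ≤ -1) : 1/10 < dist (px e) z1 := by
  rw [distXT, px_val, z1_val, lt_abs]
  right; have := xr_le_third he; linarith

lemma dx_z2 (i : ℤ) : 1/10 < dist (px i) z2 := by
  rw [distXT, px_val, z2_val, lt_abs]
  right; have := xr_lt_one i; linarith

lemma dxy_xneg {i j : ℤ} (hi : i ≤ 0) : 1/10 < dist (px i) (py j) := by
  rw [distXT, px_val, py_val, lt_abs]
  right; have := xr_le_half hi; have := yr_pos j; linarith

lemma dxy_ypos {i j : ℤ} (hj : 1 ≤ j) : 1/10 < dist (px i) (py j) := by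
  rw [distXT, px_val, py_val, lt_abs]
  right
  have := xr_lt_one i
  have : 2/3 ≤ xr j := xr_ge_two_thirds hj
  rw [yr]
  have hx1 := xr_lt_one i
  linarith

lemma dyy_neg0 {e : ℤ} (he : e ≤ -1) : 1/10 < dist (py e) (py 0) := by
  rw [distXT, py_val, py_val, yr, yr, xr_zero, lt_abs]
  right; have := xr_le_third he; have := xr_pos e; linarith

lemma dyy_0pos {d : ℤ} (hd : 1 ≤ d) : 1/10 < dist (py 0) (py d) := by
  rw [distXT, py_val, py_val, yr, yr, xr_zero, lt_abs]
  right; have := xr_ge_two_thirds hd; linarith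

lemma dyy_negpos {e d : ℤ} (he : e ≤ -1) (hd : 1 ≤ d) : 1/10 < dist (py e) (py d) := by
  rw [distXT, py_val, py_val, yr, yr, lt_abs]
  right; have := xr_le_third he; have := xr_ge_two_thirds hd; linarith

lemma dy_z0 (i : ℤ) : 1/10 < dist (py i) z0 := by
  rw [distXT, py_val, z0_val, lt_abs]
  left; have := yr_pos i; linarith

lemma dy0_z1 : 1/10 < dist (py 0) z1 := by
  rw [distXT, py_val, z1_val, yr, xr_zero]; rw [abs_of_pos] <;> norm_num

lemma dy0_z2 : 1/10 < dist (py 0) z2 := by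
  rw [distXT, py_val, z2_val, yr, xr_zero]; rw [abs_of_neg] <;> norm_num

lemma dypos_z1 {d : ℤ} (hd : 1 ≤ d) : 1/10 < dist (py d) z1 := by
  rw [distXT, py_val, z1_val, yr, lt_abs]
  left; have := xr_ge_two_thirds hd; linarith

lemma dyneg_z2 {e : ℤ} (he : e ≤ -1) : 1/10 < dist (py e) z2 := by
  rw [distXT, py_val, z2_val, yr, lt_abs]
  right; have := xr_le_third he; linarith

def isZ (q : XT) : Prop := q = z0 ∨ q = z1 ∨ q = z2

lemma hiter_fixed {q : XT} (hq : isZ q) (k : ℤ) : hiter fH k q = q := by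
  rcases hq with rfl|rfl|rfl
  exacts [hiter_z0 k, hiter_z1 k, hiter_z2 k]

lemma zval_ne {q q' : XT} (hq : isZ q) (hq' : isZ q') (h : q ≠ q') : q.1 ≠ q'.1 := by
  intro hv; exact h (Subtype.ext hv)

lemma fixed_dist {p q : XT} (hp : isZ p) (hq : isZ q) (hne : p ≠ q) : 1/10 < dist p q := by
  rcases hp with rfl|rfl|rfl <;> rcases hq with rfl|rfl|rfl <;>
    first
      | exact absurd rfl hne
      | (rw [distXT, lt_abs]; simp only [z0_val, z1_val, z2_val]; norm_num)

lemma midx_fixed_dist {q : XT} (hq : isZ q) : 1/10 < dist (px 0) q := by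
  rcases hq with rfl|rfl|rfl <;>
    (rw [distXT, px_val, xr_zero, lt_abs]; simp only [z0_val, z1_val, z2_val]; norm_num)

lemma midy_fixed_dist {q : XT} (hq : isZ q) : 1/10 < dist (py 0) q := by
  rcases hq with rfl|rfl|rfl <;>
    (rw [distXT, py_val, yr, xr_zero, lt_abs]; simp only [z0_val, z1_val, z2_val]; norm_num)

lemma dxy_y0 (i : ℤ) : 1/10 < dist (px i) (py 0) := by
  rw [distXT, px_val, py_val, yr, xr_zero, lt_abs]
  right; have := xr_lt_one i; linarith

-- three x points, ordered
lemma Lxxx {A : Set XT} {a b c : ℤ} (ha : px a ∈ A) (hb : px b ∈ A) (hc : px c ∈ A)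
    (hab : a < b) (hbc : b < c) : ∃ k : ℤ, (2:ℕ∞) < dCard (1/10) (hiter fH k '' A) := by
  apply step (-b) ha hb hc <;> rw [hiter_px, hiter_px]
  · rw [show a + -b = a - b by ring, show b + -b = (0:ℤ) by ring]
    exact dxx_neg0 (by omega)
  · rw [show a + -b = a - b by ring, show c + -b = c - b by ring]
    exact dxx_negpos (by omega) (by omega)
  · rw [show b + -b = (0:ℤ) by ring, show c + -b = c - b by ring]
    exact dxx_0pos (by omega)

lemma Lyyy {A : Set XT} {a b c : ℤ} (ha : py a ∈ A) (hb : py b ∈ A) (hc : py c ∈ A)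
    (hab : a < b) (hbc : b < c) : ∃ k : ℤ, (2:ℕ∞) < dCard (1/10) (hiter fH k '' A) := by
  apply step (-b) ha hb hc <;> rw [hiter_py, hiter_py]
  · rw [show a + -b = a - b by ring, show b + -b = (0:ℤ) by ring]
    exact dyy_neg0 (by omega)
  · rw [show a + -b = a - b by ring, show c + -b = c - b by ring]
    exact dyy_negpos (by omega) (by omega)
  · rw [show b + -b = (0:ℤ) by ring, show c + -b = c - b by ring]
    exact dyy_0pos (by omega)

-- two x points (i < j) plus a third distinct point r
lemma Lxx {A : Set XT} {i j : ℤ} {r : XT} (hi : px i ∈ A) (hj : px j ∈ A) (hij : i < j)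
    (hr : r ∈ A) (hri : r ≠ px i) (hrj : r ≠ px j) :
    ∃ k : ℤ, (2:ℕ∞) < dCard (1/10) (hiter fH k '' A) := by
  rcases mem_cases r with hz|hz|hz|⟨l,rfl⟩|⟨l,rfl⟩
  · -- r = z0 : shift -i
    subst hz
    apply step (-i) hi hj hr
    · rw [hiter_px, hiter_px, show i + -i = (0:ℤ) by ring, show j + -i = j - i by ring]
      exact dxx_0pos (by omega)
    · rw [hiter_px, hiter_fixed (Or.inl rfl), show i + -i = (0:ℤ) by ring]
      exact dx0_z0
    · rw [hiter_px, hiter_fixed (Or.inl rfl), show j + -i = j - i by ring]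
      exact dxpos_z0 (by omega)
  · -- r = z1 : shift -j
    subst hz
    apply step (-j) hi hj hr
    · rw [hiter_px, hiter_px, show i + -j = i - j by ring, show j + -j = (0:ℤ) by ring]
      exact dxx_neg0 (by omega)
    · rw [hiter_px, hiter_fixed (Or.inr (Or.inl rfl)), show i + -j = i - j by ring]
      exact dxneg_z1 (by omega)
    · rw [hiter_px, hiter_fixed (Or.inr (Or.inl rfl)), show j + -j = (0:ℤ) by ring]
      exact dx0_z1
  · -- r = z2 : shift -i
    subst hz
    apply step (-i) hi hj hr
    · rw [hiter_px, hiter_px, show i + -i = (0:ℤ) by ring, show j + -i = j - i by ring]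
      exact dxx_0pos (by omega)
    · rw [hiter_px, hiter_fixed (Or.inr (Or.inr rfl)), show i + -i = (0:ℤ) by ring]
      exact dx_z2 0
    · rw [hiter_px, hiter_fixed (Or.inr (Or.inr rfl)), show j + -i = j - i by ring]
      exact dx_z2 _
  · -- r = px l : three x's
    have hli : l ≠ i := by rintro rfl; exact hri rfl
    have hlj : l ≠ j := by rintro rfl; exact hrj rfl
    rcases lt_trichotomy l i with h|h|h
    · exact Lxxx hr hi hj h hij
    · exact absurd h hli
    · rcases lt_trichotomy l j with h'|h'|h'
      · exact Lxxx hi hr hj h h'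
      · exact absurd h' hlj
      · exact Lxxx hi hj hr hij h'
  · -- r = py l : shift -j
    apply step (-j) hi hj hr
    · rw [hiter_px, hiter_px, show i + -j = i - j by ring, show j + -j = (0:ℤ) by ring]
      exact dxx_neg0 (by omega)
    · rw [hiter_px, hiter_py, show i + -j = i - j by ring]
      exact dxy_xneg (by omega)
    · rw [hiter_px, hiter_py, show j + -j = (0:ℤ) by ring]
      exact dxy_xneg (by omega)

-- two y points (i < j) plus a third distinct point r
lemma Lyy {A : Set XT} {i j : ℤ} {r : XT} (hi : py i ∈ A) (hj : py j ∈ A) (hij : i < j)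
    (hr : r ∈ A) (hri : r ≠ py i) (hrj : r ≠ py j) :
    ∃ k : ℤ, (2:ℕ∞) < dCard (1/10) (hiter fH k '' A) := by
  rcases mem_cases r with hz|hz|hz|⟨l,rfl⟩|⟨l,rfl⟩
  · -- r = z0 : shift -i
    subst hz
    apply step (-i) hi hj hr
    · rw [hiter_py, hiter_py, show i + -i = (0:ℤ) by ring, show j + -i = j - i by ring]
      exact dyy_0pos (by omega)
    · rw [hiter_py, hiter_fixed (Or.inl rfl), show i + -i = (0:ℤ) by ring]
      exact dy_z0 0
    · rw [hiter_py, hiter_fixed (Or.inl rfl), show j + -i = j - i by ring]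
      exact dy_z0 _
  · -- r = z1 : shift -i
    subst hz
    apply step (-i) hi hj hr
    · rw [hiter_py, hiter_py, show i + -i = (0:ℤ) by ring, show j + -i = j - i by ring]
      exact dyy_0pos (by omega)
    · rw [hiter_py, hiter_fixed (Or.inr (Or.inl rfl)), show i + -i = (0:ℤ) by ring]
      exact dy0_z1
    · rw [hiter_py, hiter_fixed (Or.inr (Or.inl rfl)), show j + -i = j - i by ring]
      exact dypos_z1 (by omega)
  · -- r = z2 : shift -j
    subst hz
    apply step (-j) hi hj hr
    · rw [hiter_py, hiter_py, show i + -j = i - j by ring, show j + -j = (0:ℤ) by ring]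
      exact dyy_neg0 (by omega)
    · rw [hiter_py, hiter_fixed (Or.inr (Or.inr rfl)), show i + -j = i - j by ring]
      exact dyneg_z2 (by omega)
    · rw [hiter_py, hiter_fixed (Or.inr (Or.inr rfl)), show j + -j = (0:ℤ) by ring]
      exact dy0_z2
  · -- r = px l : shift -i
    apply step (-i) hi hj hr
    · rw [hiter_py, hiter_py, show i + -i = (0:ℤ) by ring, show j + -i = j - i by ring]
      exact dyy_0pos (by omega)
    · rw [hiter_py, hiter_px, show i + -i = (0:ℤ) by ring]
      rw [dist_comm]
      exact dxy_y0 _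
    · rw [hiter_py, hiter_px, show j + -i = j - i by ring]
      rw [dist_comm]
      exact dxy_ypos (by omega)
  · -- r = py l : three y's
    have hli : l ≠ i := by rintro rfl; exact hri rfl
    have hlj : l ≠ j := by rintro rfl; exact hrj rfl
    rcases lt_trichotomy l i with h|h|h
    · exact Lyyy hr hi hj h hij
    · exact absurd h hli
    · rcases lt_trichotomy l j with h'|h'|h'
      · exact Lyyy hi hr hj h h'
      · exact absurd h' hlj
      · exact Lyyy hi hj hr hij h'

lemma L3 {A : Set XT} {q1 q2 p : XT} {i : ℤ} (hq1 : q1 ∈ A) (hq2 : q2 ∈ A) (hp : p ∈ A)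
    (hz1 : isZ q1) (hz2 : isZ q2) (hne : q1 ≠ q2) (hpx : p = px i ∨ p = py i) :
    ∃ k : ℤ, (2:ℕ∞) < dCard (1/10) (hiter fH k '' A) := by
  apply step (-i) hp hq1 hq2
  · rw [hiter_fixed hz1]
    rcases hpx with rfl|rfl
    · rw [hiter_px, show i + -i = (0:ℤ) by ring]; exact midx_fixed_dist hz1
    · rw [hiter_py, show i + -i = (0:ℤ) by ring]; exact midy_fixed_dist hz1
  · rw [hiter_fixed hz2]
    rcases hpx with rfl|rfl
    · rw [hiter_px, show i + -i = (0:ℤ) by ring]; exact midx_fixed_dist hz2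
    · rw [hiter_py, show i + -i = (0:ℤ) by ring]; exact midy_fixed_dist hz2
  · rw [hiter_fixed hz1, hiter_fixed hz2]
    exact fixed_dist hz1 hz2 hne

lemma L4 {A : Set XT} (h0 : z0 ∈ A) (h1 : z1 ∈ A) (h2 : z2 ∈ A) :
    ∃ k : ℤ, (2:ℕ∞) < dCard (1/10) (hiter fH k '' A) := by
  apply step 0 h0 h1 h2 <;>
    rw [hiter_fixed (by simp [isZ]), hiter_fixed (by simp [isZ])]
  · exact fixed_dist (Or.inl rfl) (Or.inr (Or.inl rfl)) (by simp [z0, z1, Subtype.ext_iff])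
  · exact fixed_dist (Or.inl rfl) (Or.inr (Or.inr rfl)) (by simp [z0, z2, Subtype.ext_iff])
  · exact fixed_dist (Or.inr (Or.inl rfl)) (Or.inr (Or.inr rfl)) (by simp [z1, z2, Subtype.ext_iff])

lemma third_exists {A : Set XT} (hA : A.encard = 4) (u v : XT) :
    ∃ r ∈ A, r ≠ u ∧ r ≠ v := by
  by_contra h
  push_neg at h
  have hsub : A ⊆ {u, v} := by
    intro r hr
    by_cases hu : r = u
    · exact Or.inl hu
    · exact Or.inr (h r hr hu)
  have h2 : ({u, v} : Set XT).encard ≤ 2 := by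
    refine (Set.encard_insert_le _ _).trans ?_
    rw [Set.encard_singleton]; rfl
  have hle := (Set.encard_le_encard hsub).trans h2
  rw [hA] at hle
  norm_num at hle

def Zs : Set XT := {q | isZ q}
def Xs : Set XT := {q | ∃ i, q = px i}
def Ys : Set XT := {q | ∃ i, q = py i}

lemma MW42 : MNExpansiveWith fH 4 2 (1/10) := by
  intro A hA
  by_cases hx2 : ∃ i j : ℤ, i < j ∧ px i ∈ A ∧ px j ∈ A
  · obtain ⟨i, j, hij, hi, hj⟩ := hx2
    obtain ⟨r, hr, hri, hrj⟩ := third_exists hA (px i) (px j)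
    exact Lxx hi hj hij hr hri hrj
  by_cases hy2 : ∃ i j : ℤ, i < j ∧ py i ∈ A ∧ py j ∈ A
  · obtain ⟨i, j, hij, hi, hj⟩ := hy2
    obtain ⟨r, hr, hri, hrj⟩ := third_exists hA (py i) (py j)
    exact Lyy hi hj hij hr hri hrj
  -- remaining: at most one x point, at most one y point
  have hXsub : (A ∩ Xs).Subsingleton := by
    rintro a ⟨haA, i, rfl⟩ b ⟨hbA, j, rfl⟩
    rcases lt_trichotomy i j with h|h|h
    · exact absurd ⟨i, j, h, haA, hbA⟩ hx2
    · rw [h]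
    · exact absurd ⟨j, i, h, hbA, haA⟩ hx2
  have hYsub : (A ∩ Ys).Subsingleton := by
    rintro a ⟨haA, i, rfl⟩ b ⟨hbA, j, rfl⟩
    rcases lt_trichotomy i j with h|h|h
    · exact absurd ⟨i, j, h, haA, hbA⟩ hy2
    · rw [h]
    · exact absurd ⟨j, i, h, hbA, haA⟩ hy2
  have hcover : A ⊆ (A ∩ Zs) ∪ ((A ∩ Xs) ∪ (A ∩ Ys)) := by
    intro p hp
    rcases mem_cases p with h|h|h|⟨i,hi⟩|⟨i,hi⟩
    · exact Or.inl ⟨hp, Or.inl h⟩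
    · exact Or.inl ⟨hp, Or.inr (Or.inl h)⟩
    · exact Or.inl ⟨hp, Or.inr (Or.inr h)⟩
    · exact Or.inr (Or.inl ⟨hp, i, hi⟩)
    · exact Or.inr (Or.inr ⟨hp, i, hi⟩)
  have hZnt : (A ∩ Zs).Nontrivial := by
    rw [← Set.not_subsingleton_iff]
    intro hs
    have hle : A.encard ≤ 1 + (1 + 1) := by
      calc A.encard ≤ ((A ∩ Zs) ∪ ((A ∩ Xs) ∪ (A ∩ Ys))).encard := Set.encard_le_encard hcover
        _ ≤ (A ∩ Zs).encard + ((A ∩ Xs) ∪ (A ∩ Ys)).encard := Set.encard_union_le _ _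
        _ ≤ (A ∩ Zs).encard + ((A ∩ Xs).encard + (A ∩ Ys).encard) := by
            gcongr; exact Set.encard_union_le _ _
        _ ≤ 1 + (1 + 1) := by
            gcongr
            exacts [Set.encard_le_one_iff.2 (fun a b ha hb => hs ha hb), Set.encard_le_one_iff.2 (fun a b ha hb => hXsub ha hb), Set.encard_le_one_iff.2 (fun a b ha hb => hYsub ha hb)]
    rw [hA] at hle
    norm_num at hle
  obtain ⟨q1, hq1, q2, hq2, hne⟩ := hZnt
  have hP : ∃ p ∈ A, p ∈ Xs ∪ Ys := by
    by_contra h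
    push_neg at h
    have hsub : A ⊆ Zs := by
      intro p hp
      rcases mem_cases p with h'|h'|h'|⟨i,hi⟩|⟨i,hi⟩
      · exact Or.inl h'
      · exact Or.inr (Or.inl h')
      · exact Or.inr (Or.inr h')
      · exact absurd (Or.inl ⟨i, hi⟩) (h p hp)
      · exact absurd (Or.inr ⟨i, hi⟩) (h p hp)
    have hle : A.encard ≤ 3 := by
      calc A.encard ≤ (Zs : Set XT).encard := Set.encard_le_encard hsub
        _ = ({z0, z1, z2} : Set XT).encard := by congr 1
        _ ≤ 3 := by
            refine (Set.encard_insert_le _ _).trans ?_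
            refine le_trans (add_le_add_left (Set.encard_insert_le _ _) 1) ?_
            rw [Set.encard_singleton]; rfl
    rw [hA] at hle
    norm_num at hle
  obtain ⟨p, hpA, hpXY⟩ := hP
  rcases hpXY with ⟨i, hi⟩ | ⟨i, hi⟩
  · exact L3 hq1.1 hq2.1 hpA hq1.2 hq2.2 hne (Or.inl hi)
  · exact L3 hq1.1 hq2.1 hpA hq1.2 hq2.2 hne (Or.inr hi)

lemma half_pow_cast (m : ℕ) : (1/2:ℝ)^m = (2:ℝ)^(-(m:ℤ)) := by
  rw [one_div, inv_pow, ← zpow_natCast, ← zpow_neg]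

lemma xr_small_pos {m : ℕ} {j : ℤ} (hj : (m:ℤ) ≤ j) : 1 - xr j ≤ (1/2:ℝ)^m := by
  have h := two_zpow_pos j
  have hmj : (1:ℝ) ≤ 2^(j - m) := one_le_zpow₀ (by norm_num) (by omega)
  have hprod : (2:ℝ)^(-(m:ℤ)) * 2^j = 2^(j - (m:ℤ)) := by
    rw [← zpow_add₀ (by norm_num : (2:ℝ) ≠ 0)]; congr 1; ring
  have hx : 1 - xr j = 1/(2^j+1) := by
    rw [xr]; field_simp; ring
  rw [hx, half_pow_cast, div_le_iff₀ (by linarith)]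
  have hm := two_zpow_pos (-(m:ℤ))
  nlinarith
lemma xr_small_neg {m : ℕ} {j : ℤ} (hj : j ≤ -(m:ℤ)) : xr j ≤ (1/2:ℝ)^m := by
  have h := two_zpow_pos j
  have h2 : (2:ℝ)^j ≤ 2^(-(m:ℤ)) := zpow_le_zpow_right₀ (by norm_num) hj
  have : xr j ≤ 2^j := by
    rw [xr, div_le_iff₀ (by linarith)]
    nlinarith
  rw [half_pow_cast]
  linarith

lemma pair_encard_le (a b : XT) : ({a, b} : Set XT).encard ≤ 2 := by
  refine (Set.encard_insert_le _ _).trans ?_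
  rw [Set.encard_singleton]; rfl

lemma px_ne_z1 (i : ℤ) : px i ≠ z1 := by
  intro h
  have := congrArg Subtype.val h
  rw [px_val, z1_val] at this
  exact absurd this (ne_of_lt (xr_lt_one i))

lemma py_ne_z1 (i : ℤ) : py i ≠ z1 := by
  intro h
  have := congrArg Subtype.val h
  rw [py_val, z1_val] at this
  exact absurd this (ne_of_gt (yr_pos i))

lemma px_ne_py (i j : ℤ) : px i ≠ py j := by
  intro h
  have := congrArg Subtype.val h
  rw [px_val, py_val] at this
  have := xr_lt_one i
  have := yr_pos j
  linarith

lemma not32 : ¬ MNExpansive fH 3 2 := by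
  rintro ⟨δ, hδ, hexp⟩
  obtain ⟨m, hm⟩ := exists_pow_lt_of_lt_one hδ (by norm_num : (1/2:ℝ) < 1)
  have hA3 : ({px (m:ℤ), py (-(m:ℤ)), z1} : Set XT).encard = 3 := by
    rw [Set.encard_eq_three]
    exact ⟨_, _, _, px_ne_py _ _, px_ne_z1 _, py_ne_z1 _, rfl⟩
  obtain ⟨k, hk⟩ := hexp {px (m:ℤ), py (-(m:ℤ)), z1} (by exact_mod_cast hA3)
  have himg : hiter fH k '' {px (m:ℤ), py (-(m:ℤ)), z1}
      = {px ((m:ℤ)+k), py (-(m:ℤ)+k), z1} := by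
    rw [Set.image_insert_eq, Set.image_insert_eq, Set.image_singleton,
        hiter_px, hiter_py, hiter_z1]
  rw [himg] at hk
  have hle : dCard δ ({px ((m:ℤ)+k), py (-(m:ℤ)+k), z1} : Set XT) ≤ 2 := by
    apply iSup₂_le
    rintro B ⟨hBsub, hBsep⟩
    rcases le_or_gt 0 k with hkpos | hkneg
    · -- px (m+k) close to z1
      have hclose : dist (px ((m:ℤ)+k)) z1 ≤ δ := by
        rw [distXT, px_val, z1_val, abs_of_neg (by linarith [xr_lt_one ((m:ℤ)+k)])]
        have := xr_small_pos (m := m) (j := (m:ℤ)+k) (by omega)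
        linarith
      have hnot : px ((m:ℤ)+k) ∉ B ∨ z1 ∉ B := by
        by_contra hc
        push_neg at hc
        have := hBsep _ hc.1 _ hc.2 (px_ne_z1 _)
        linarith
      rcases hnot with h|h
      · have hsub : B ⊆ {py (-(m:ℤ)+k), z1} := by
          intro t ht
          rcases hBsub ht with rfl|rfl|rfl
          · exact absurd ht h
          · exact Or.inl rfl
          · exact Or.inr rfl
        exact (Set.encard_le_encard hsub).trans (pair_encard_le _ _)
      · have hsub : B ⊆ {px ((m:ℤ)+k), py (-(m:ℤ)+k)} := by
          intro t ht
          rcases hBsub ht with rfl|rfl|rfl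
          · exact Or.inl rfl
          · exact Or.inr rfl
          · exact absurd ht h
        exact (Set.encard_le_encard hsub).trans (pair_encard_le _ _)
    · -- py (-m+k) close to z1
      have hclose : dist (py (-(m:ℤ)+k)) z1 ≤ δ := by
        rw [distXT, py_val, z1_val, yr, abs_of_pos (by linarith [xr_pos (-(m:ℤ)+k)])]
        have := xr_small_neg (m := m) (j := -(m:ℤ)+k) (by omega)
        linarith
      have hnot : py (-(m:ℤ)+k) ∉ B ∨ z1 ∉ B := by
        by_contra hc
        push_neg at hc
        have := hBsep _ hc.1 _ hc.2 (py_ne_z1 _)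
        linarith
      rcases hnot with h|h
      · have hsub : B ⊆ {px ((m:ℤ)+k), z1} := by
          intro t ht
          rcases hBsub ht with rfl|rfl|rfl
          · exact Or.inl rfl
          · exact absurd ht h
          · exact Or.inr rfl
        exact (Set.encard_le_encard hsub).trans (pair_encard_le _ _)
      · have hsub : B ⊆ {px ((m:ℤ)+k), py (-(m:ℤ)+k)} := by
          intro t ht
          rcases hBsub ht with rfl|rfl|rfl
          · exact Or.inl rfl
          · exact Or.inr rfl
          · exact absurd ht h
        exact (Set.encard_le_encard hsub).trans (pair_encard_le _ _)
  exact absurd hk (not_lt.2 hle)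

theorem stmt18 : ∃ (X : Type) (_ : MetricSpace X) (_ : CompactSpace X) (f : X ≃ₜ X),
    MNExpansive f 4 2 ∧ ¬ MNExpansive f 3 2 :=
  ⟨XT, inferInstance, inferInstance, fH, ⟨1/10, by norm_num, MW42⟩, not32⟩
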